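/- For every sequence I of length n, Nai_W(I)/Maj_W(I) ≤ n/4 + 1 (precisely at most n/4 + 1/2 for even n and n/4 + 1 − 1/(4n) for odd n), and this is asymptotically attained by W_n; hence the relative worst order function of Nai and Maj is n/4. -/

import Mathlib

open scoped BigOperators

noncomputable section

/-- frequency of item `a` in sequence `I` -/
def freq (I : List ℕ) (a : ℕ) : ℝ := (I.count a : ℝ) / (I.length : ℝ)

/-- profit (aggregate frequency) of buffer sequence `S` against input `I` -/
def profit (I S : List ℕ) : ℝ := (S.map (freq I)).sum

/-- Naive algorithm: buffers every arriving item. -/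
def naiP (I : List ℕ) : ℝ := profit I I

/-- Buffers of the eager algorithm: buffer each arriving item until the first
repeated item (two equal consecutive items), then keep it forever. -/
def eagRun : List ℕ → List ℕ
  | [] => []
  | [x] => [x]
  | x :: y :: rest =>
      if x = y then x :: List.replicate (rest.length + 1) x
      else x :: eagRun (y :: rest)

def eagP (I : List ℕ) : ℝ := profit I (eagRun I)

/-- One step of the Majority algorithm on state (buffer, counter). -/
def majStep (s : ℕ × ℕ) (a : ℕ) : ℕ × ℕ :=
  if s.2 = 0 then (a, 1)
  else if a = s.1 then (s.1, s.2 + 1)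
  else (s.1, s.2 - 1)

def majBuffers (I : List ℕ) : List ℕ :=
  ((List.scanl majStep ((0 : ℕ), (0 : ℕ)) I).tail).map Prod.fst

def majP (I : List ℕ) : ℝ := profit I (majBuffers I)

/-- A valid offline buffer schedule: at each step the buffer holds either the
currently arriving item or the previously buffered item (the first buffered
item must be the first arriving item). -/
def ValidSched (I S : List ℕ) : Prop :=
  S.length = I.length ∧
    ∀ i, i < S.length →
      S.getD i 0 = I.getD i 0 ∨ (0 < i ∧ S.getD i 0 = S.getD (i - 1) 0)

/-- Optimal offline profit. -/
def optP (I : List ℕ) : ℝ := sSup {x | ∃ S, ValidSched I S ∧ x = profit I S}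

/-- Worst-permutation value of an algorithm's profit. -/
def worstP (f : List ℕ → ℝ) (I : List ℕ) : ℝ := sInf {x | ∃ J, J.Perm I ∧ x = f J}

/-- E_n = a,a,b,b,...,b with n-2 copies of b. -/
def Eseq (n a b : ℕ) : List ℕ := a :: a :: List.replicate (n - 2) b

/-- W_n = a_1,a_0,a_2,a_0,... with item 0 playing the role of a_0. -/
def Wseq (n : ℕ) : List ℕ :=
  ((List.range (n / 2)).flatMap fun i => [i + 1, 0]) ++
    (if n % 2 = 1 then [n / 2 + 1] else [])

/-- W'_n = a_1,...,a_⌈n/2⌉,a_0,...,a_0 with ⌊n/2⌋ copies of a_0 = 0. -/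
def Wseq' (n : ℕ) : List ℕ :=
  ((List.range ((n + 1) / 2)).map (· + 1)) ++ List.replicate (n / 2) 0

/-- I_n = ⌈n/2⌉ copies of a_0 = 0 followed by ⌊n/2⌋ distinct items. -/
def Iseq (n : ℕ) : List ℕ :=
  List.replicate ((n + 1) / 2) 0 ++ (List.range (n / 2)).map (· + 1)

/-- D(I): the items of `I` listed in nondecreasing order of frequency. -/
def Dsort (I : List ℕ) : List ℕ :=
  List.insertionSort (fun x y => I.count x ≤ I.count y) I

/-- The interleaving permutation a'_1, a'_n, a'_2, a'_{n-1}, ... of a list. -/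
def interleave : List ℕ → List ℕ
  | [] => []
  | x :: xs => x :: interleave xs.reverse
termination_by l => l.length
decreasing_by set_option linter.unnecessarySimpa false in simpa using Nat.lt_succ_self xs.length

/-- max over sequences of length n of f(I) - g(I). -/
def maxDiff (f g : List ℕ → ℝ) (n : ℕ) : ℝ :=
  sSup {d | ∃ I : List ℕ, I.length = n ∧ d = f I - g I}

/-- min over sequences of length n of f(I) - g(I). -/
def minDiff (f g : List ℕ → ℝ) (n : ℕ) : ℝ :=
  sInf {d | ∃ I : List ℕ, I.length = n ∧ d = f I - g I}

/-- A deterministic online algorithm for the single-buffer frequent items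
problem: the buffer after each nonempty prefix is either the arriving item or
the previous buffer content. -/
structure OnlineAlg where
  buf : List ℕ → ℕ
  first : ∀ x, buf [x] = x
  step : ∀ l x, l ≠ [] → buf (l ++ [x]) = x ∨ buf (l ++ [x]) = buf l

/-- Profit of an online algorithm on input `I`. -/
def oprofit (A : OnlineAlg) (I : List ℕ) : ℝ :=
  ∑ t ∈ Finset.range I.length, freq I (A.buf (I.take (t + 1)))

end
section Aux

/-- recursive form of the buffers of Maj -/
def bufRun : ℕ × ℕ → List ℕ → List ℕ
  | _, [] => []
  | s, x :: xs => (majStep s x).1 :: bufRun (majStep s x) xs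

lemma scanl_map_fst (l : List ℕ) : ∀ s : ℕ × ℕ,
    (List.scanl majStep s l).map Prod.fst = s.1 :: bufRun s l := by
  induction l with
  | nil => intro s; simp [bufRun]
  | cons x xs ih => intro s; simp [List.scanl_cons, bufRun, ih]

lemma majBuffers_eq_bufRun (I : List ℕ) : majBuffers I = bufRun (0, 0) I := by
  rw [majBuffers, List.map_tail, scanl_map_fst]
  rfl

lemma bufRun_length : ∀ (l : List ℕ) (s : ℕ × ℕ), (bufRun s l).length = l.length
  | [], _ => rfl
  | x :: xs, s => by simp [bufRun, bufRun_length xs]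

lemma bufRun_count : ∀ (l : List ℕ) (s : ℕ × ℕ) (a : ℕ),
    (bufRun s l).count a ≤ 2 * l.count a + (if s.1 = a then s.2 else 0)
  | [], s, a => by simp [bufRun]
  | x :: xs, ⟨b, c⟩, a => by
    have ih := bufRun_count xs (majStep (b, c) x) a
    simp only [bufRun, List.count_cons]
    by_cases hc : c = 0
    · have h : majStep (b, c) x = (x, 1) := by simp [majStep, hc]
      simp only [h] at ih ⊢
      by_cases hxa : x = a <;> simp [hxa, hc] at ih ⊢ <;> omega
    · by_cases hx : x = b
      · subst hx
        have h : majStep (x, c) x = (x, c + 1) := by simp [majStep, hc]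
        simp only [h] at ih ⊢
        by_cases hxa : x = a <;> simp [hxa, hc] at ih ⊢ <;> omega
      · have h : majStep (b, c) x = (b, c - 1) := by simp [majStep, hc, hx]
        simp only [h] at ih ⊢
        by_cases hxa : x = a <;> by_cases hba : b = a <;>
          simp [hxa, hba, hc] at ih ⊢ <;> omega

lemma bufRun_mem' : ∀ (l : List ℕ) (s : ℕ × ℕ) (b : ℕ), b ∈ bufRun s l → b ∈ l ∨ b = s.1
  | [], _, b => by intro h; simp [bufRun] at h
  | x :: xs, s, b => by
    intro hb
    simp only [bufRun, List.mem_cons] at hb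
    rcases hb with h | h
    · rcases s with ⟨p, c⟩
      simp only [majStep] at h
      split_ifs at h <;> simp_all
    · rcases bufRun_mem' xs _ b h with h' | h'
      · exact Or.inl (List.mem_cons_of_mem _ h')
      · rcases s with ⟨p, c⟩
        simp only [majStep] at h'
        split_ifs at h' <;> simp_all

lemma bufRun_mem (l : List ℕ) (s : ℕ × ℕ) (hs : s.2 = 0) (b : ℕ)
    (hb : b ∈ bufRun s l) : b ∈ l := by
  cases l with
  | nil => simp [bufRun] at hb
  | cons x xs =>
    simp only [bufRun, List.mem_cons] at hb
    have hstep : majStep s x = (x, 1) := by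
      rcases s with ⟨p, c⟩; simp at hs; simp [majStep, hs]
    rw [hstep] at hb
    rcases hb with h | h
    · simp [h]
    · rcases bufRun_mem' xs _ b h with h' | h' <;> simp [h']

end Aux
section Aux2

lemma list_sum_map_div (l : List ℕ) (f : ℕ → ℝ) (c : ℝ) :
    (l.map fun x => f x / c).sum = (l.map f).sum / c := by
  induction l with
  | nil => simp
  | cons x xs ih => simp [ih, add_div]

lemma majP_nonneg (J : List ℕ) : 0 ≤ majP J := by
  apply List.sum_nonneg
  intro x hx
  simp only [List.mem_map] at hx
  obtain ⟨a, _, rfl⟩ := hx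
  exact div_nonneg (by positivity) (by positivity)

/-- per-item arithmetic inequality over ℤ -/
lemma item_ineqZ (n c d : ℤ) (hn : 2 ≤ n) (hc0 : 0 ≤ c) (hc : c ≤ n) (hd0 : 0 ≤ d)
    (hd : d ≤ n) (hdc : d ≤ 2 * c) :
    (n + 2) * d * c + 2 * n * c ≤ 2 * n * c * c + 2 * n * d := by
  rcases le_or_gt c 1 with h2 | h2
  · interval_cases c
    · have : d = 0 := by omega
      simp [this]
    · nlinarith
  · rcases le_or_gt (2 * c) n with h | h
    · nlinarith [mul_nonneg (by omega : (0:ℤ) ≤ 2 * c - d)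
        (by nlinarith : (0:ℤ) ≤ (n + 2) * c - 2 * n),
        mul_nonneg (by omega : (0:ℤ) ≤ 2 * c) (by omega : (0:ℤ) ≤ n - 2 * c)]
    · nlinarith [mul_nonneg (by omega : (0:ℤ) ≤ n - d)
        (by nlinarith : (0:ℤ) ≤ (n + 2) * c - 2 * n),
        mul_nonneg (mul_nonneg (by omega : (0:ℤ) ≤ n) (by omega : (0:ℤ) ≤ c - 2))
          (by omega : (0:ℤ) ≤ 2 * c - n)]

/-- per-item arithmetic inequality -/
lemma item_ineq (n c d : ℕ) (hn : 2 ≤ n) (hc : c ≤ n) (hd : d ≤ n) (hdc : d ≤ 2 * c) :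
    (n + 2) * d * c + 2 * n * c ≤ 2 * n * c * c + 2 * n * d := by
  have := item_ineqZ n c d (by exact_mod_cast hn) (by positivity) (by exact_mod_cast hc)
    (by positivity) (by exact_mod_cast hd) (by exact_mod_cast hdc)
  exact_mod_cast this

lemma sum_ineq (A : Finset ℕ) (c s : ℕ → ℕ) (n : ℕ) (hn : 2 ≤ n)
    (hsc : ∀ a ∈ A, s a ≤ 2 * c a) (hcn : ∀ a ∈ A, c a ≤ n)
    (hc : ∑ a ∈ A, c a = n) (hs : ∑ a ∈ A, s a = n) :
    4 * ∑ a ∈ A, c a * c a ≤ (n + 2) * ∑ a ∈ A, s a * c a := by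
  set d : ℕ → ℕ := fun a => 2 * c a - s a with hd
  have hsd : ∀ a ∈ A, s a + d a = 2 * c a := fun a ha => by
    have := hsc a ha; simp only [hd]; omega
  have hdsum : ∑ a ∈ A, d a = n := by
    have h1 : ∑ a ∈ A, (s a + d a) = ∑ a ∈ A, 2 * c a := Finset.sum_congr rfl hsd
    rw [Finset.sum_add_distrib, ← Finset.mul_sum, hc, hs] at h1
    omega
  have hdn : ∀ a ∈ A, d a ≤ n := fun a ha => by
    calc d a ≤ ∑ a ∈ A, d a := Finset.single_le_sum (fun _ _ => Nat.zero_le _) ha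
    _ = n := hdsum
  -- per-item summed
  have key : (n + 2) * ∑ a ∈ A, d a * c a ≤ 2 * n * ∑ a ∈ A, c a * c a := by
    have h1 : ∑ a ∈ A, ((n + 2) * d a * c a + 2 * n * c a)
        ≤ ∑ a ∈ A, (2 * n * c a * c a + 2 * n * d a) := by
      apply Finset.sum_le_sum
      intro a ha
      exact item_ineq n (c a) (d a) hn (hcn a ha) (hdn a ha) (by have := hsc a ha; simp only [hd]; omega)
    rw [Finset.sum_add_distrib, Finset.sum_add_distrib] at h1
    simp only [← Finset.mul_sum, hc, hdsum] at h1
    have e1 : ∑ a ∈ A, (n + 2) * d a * c a = (n + 2) * ∑ a ∈ A, d a * c a := by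
      rw [Finset.mul_sum]; apply Finset.sum_congr rfl; intros; ring
    have e2 : ∑ a ∈ A, 2 * n * c a * c a = 2 * n * ∑ a ∈ A, c a * c a := by
      rw [Finset.mul_sum]; apply Finset.sum_congr rfl; intros; ring
    rw [e1, e2] at h1
    omega
  have hsplit : ∑ a ∈ A, s a * c a + ∑ a ∈ A, d a * c a = 2 * ∑ a ∈ A, c a * c a := by
    rw [← Finset.sum_add_distrib, Finset.mul_sum]
    apply Finset.sum_congr rfl
    intro a ha
    have := hsd a ha
    nlinarith [hsd a ha]
  nlinarith [key, hsplit]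

end Aux2
section Aux3

lemma freq_eq (I : List ℕ) (a : ℕ) : freq I a = (I.count a : ℝ) / I.length := rfl

lemma naiP_eq (I : List ℕ) :
    naiP I = ((∑ a ∈ I.toFinset, I.count a * I.count a : ℕ) : ℝ) / I.length := by
  rw [naiP, profit]
  have h1 : I.map (freq I) = I.map fun x => (I.count x : ℝ) / I.length := rfl
  rw [h1, list_sum_map_div, Finset.sum_list_map_count]
  push_cast [nsmul_eq_mul]
  ring_nf

lemma majP_eq (J : List ℕ) :
    majP J = ((∑ a ∈ J.toFinset, (majBuffers J).count a * J.count a : ℕ) : ℝ) / J.length := by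
  rw [majP, profit]
  have h1 : (majBuffers J).map (freq J)
      = (majBuffers J).map fun x => (J.count x : ℝ) / J.length := rfl
  rw [h1, list_sum_map_div, Finset.sum_list_map_count]
  have hsub : (majBuffers J).toFinset ⊆ J.toFinset := by
    intro a ha
    rw [List.mem_toFinset] at ha ⊢
    have h2 := bufRun_count J (0, 0) a
    rw [← majBuffers_eq_bufRun] at h2
    have h3 : 0 < (majBuffers J).count a := List.count_pos_iff.mpr ha
    by_contra hmem
    have : J.count a = 0 := List.count_eq_zero_of_not_mem hmem
    simp [this] at h2
    omega
  rw [Finset.sum_subset hsub (fun a _ hb => by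
    have : (majBuffers J).count a = 0 :=
      List.count_eq_zero_of_not_mem (fun h => hb (List.mem_toFinset.mpr h))
    simp [this])]
  push_cast [nsmul_eq_mul]
  ring_nf

lemma majBuffers_length (J : List ℕ) : (majBuffers J).length = J.length := by
  rw [majBuffers_eq_bufRun, bufRun_length]

lemma majBuffers_count_le (J : List ℕ) (a : ℕ) :
    (majBuffers J).count a ≤ 2 * J.count a := by
  have h := bufRun_count J (0, 0) a
  rw [← majBuffers_eq_bufRun] at h
  split_ifs at h <;> omega

/-- key per-permutation inequality -/
lemma perJ (I J : List ℕ) (hp : J.Perm I) (h1 : 1 ≤ I.length) :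
    naiP I ≤ max 1 (((I.length : ℝ) + 2) / 4) * majP J := by
  rcases eq_or_lt_of_le h1 with he | h2
  · -- length 1
    obtain ⟨x, rfl⟩ := List.length_eq_one_iff.mp he.symm
    have hJ : J = [x] := List.perm_singleton.mp hp
    subst hJ
    have hna : naiP [x] = 1 := by simp [naiP, profit, freq]
    have hma : majP [x] = 1 := by
      simp [majP, profit, majBuffers_eq_bufRun, bufRun, majStep, freq]
    rw [hna, hma, mul_one]
    exact le_max_left _ _
  · -- length ≥ 2
    set n := I.length with hn
    have hcnt : ∀ a, J.count a = I.count a := fun a => hp.count_eq a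
    have hlen : J.length = n := hp.length_eq
    have htf : J.toFinset = I.toFinset := List.toFinset_eq_of_perm _ _ hp
    set Q : ℕ := ∑ a ∈ I.toFinset, I.count a * I.count a with hQ
    set T : ℕ := ∑ a ∈ I.toFinset, (majBuffers J).count a * I.count a with hT
    have hmain : 4 * Q ≤ (n + 2) * T := by
      apply sum_ineq I.toFinset (fun a => I.count a) (fun a => (majBuffers J).count a) n h2
      · intro a _
        have h3 := majBuffers_count_le J a
        rw [hcnt a] at h3
        exact h3
      · intro a _; exact List.count_le_length (a := a) (l := I)
      · exact List.sum_toFinset_count_eq_length I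
      · have hsub : (majBuffers J).toFinset ⊆ I.toFinset := by
          intro a ha
          rw [List.mem_toFinset] at ha ⊢
          have h3 : 0 < (majBuffers J).count a := List.count_pos_iff.mpr ha
          have h4 := majBuffers_count_le J a
          rw [hcnt a] at h4
          exact List.count_pos_iff.mp (by omega)
        rw [← Finset.sum_subset hsub (fun a _ hb => List.count_eq_zero_of_not_mem
          (fun h => hb (List.mem_toFinset.mpr h)))]
        rw [List.sum_toFinset_count_eq_length, majBuffers_length, hlen]
    have hQr : naiP I = (Q : ℝ) / n := naiP_eq I
    have hTr : majP J = (T : ℝ) / n := by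
      rw [majP_eq, htf, hlen, hT]
      congr 2
      exact Finset.sum_congr rfl fun a _ => by rw [hcnt a]
    have hn0 : (0 : ℝ) < (n : ℝ) := by
      have : 0 < n := by omega
      exact_mod_cast this
    rw [hQr, hTr]
    have h4 : 4 * (Q : ℝ) ≤ ((n : ℝ) + 2) * T := by exact_mod_cast hmain
    have hTn : (0 : ℝ) ≤ (T : ℝ) / n := by positivity
    calc (Q : ℝ) / n ≤ (((n : ℝ) + 2) / 4) * ((T : ℝ) / n) := by
          rw [show (((n : ℝ) + 2) / 4) * ((T : ℝ) / n) = (((n : ℝ) + 2) / 4 * T) / n by ring,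
            div_le_div_iff₀ hn0 hn0]
          nlinarith
      _ ≤ max 1 (((n : ℝ) + 2) / 4) * ((T : ℝ) / n) :=
          mul_le_mul_of_nonneg_right (le_max_right _ _) hTn

end Aux3
section Aux4

lemma worstP_majP_nonneg (I : List ℕ) : 0 ≤ worstP majP I := by
  rw [worstP]
  have hne : {x | ∃ J, J.Perm I ∧ x = majP J}.Nonempty := ⟨majP I, I, List.Perm.refl I, rfl⟩
  apply le_csInf hne
  rintro x ⟨J, hJ, rfl⟩
  exact majP_nonneg J

lemma naiP_nil : naiP [] = 0 := by simp [naiP, profit]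

lemma naiP_le_mul (I : List ℕ) (K : ℝ) (hKnn : 0 ≤ K) (hK1 : 1 ≤ I.length → 1 ≤ K)
    (hK2 : ((I.length : ℝ) + 2) / 4 ≤ K) : naiP I ≤ K * worstP majP I := by
  rcases Nat.eq_zero_or_pos I.length with h0 | h1
  · rw [List.length_eq_zero_iff.mp h0, naiP_nil]
    exact mul_nonneg hKnn (worstP_majP_nonneg [])
  · have hK1' : 1 ≤ K := hK1 h1
    have hK0 : (0 : ℝ) < K := by linarith
    have hmax : max 1 (((I.length : ℝ) + 2) / 4) ≤ K := max_le hK1' hK2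
    rw [← div_le_iff₀' hK0, worstP]
    have hne : {x | ∃ J, J.Perm I ∧ x = majP J}.Nonempty := ⟨majP I, I, List.Perm.refl I, rfl⟩
    apply le_csInf hne
    rintro x ⟨J, hJ, rfl⟩
    rw [div_le_iff₀ hK0]
    calc naiP I ≤ max 1 (((I.length : ℝ) + 2) / 4) * majP J := perJ I J hJ h1
      _ ≤ K * majP J := mul_le_mul_of_nonneg_right hmax (majP_nonneg J)
      _ = majP J * K := mul_comm _ _

lemma majP_ge_one (J : List ℕ) (hJ : J ≠ []) : 1 ≤ majP J := by
  have hn : 0 < J.length := List.length_pos_iff.mpr hJ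
  have hn0 : (0 : ℝ) < (J.length : ℝ) := by exact_mod_cast hn
  have step : ∀ b ∈ majBuffers J, (1 : ℝ) / J.length ≤ freq J b := by
    intro b hb
    rw [majBuffers_eq_bufRun] at hb
    have hbJ : b ∈ J := bufRun_mem J (0, 0) rfl b hb
    have hc : 1 ≤ J.count b := List.count_pos_iff.mpr hbJ
    rw [freq_eq]
    gcongr
    exact_mod_cast hc
  have hsum := List.sum_le_sum step
  have hconst : ((majBuffers J).map fun _ => (1 : ℝ) / J.length).sum = 1 := by
    rw [List.map_const', List.sum_replicate, majBuffers_length, nsmul_eq_mul]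
    field_simp
  rw [hconst] at hsum
  exact hsum

end Aux4
section Aux5

def wpairs (m : ℕ) : List ℕ := (List.range m).flatMap fun i => [i + 1, 0]

lemma Wseq_eq (n : ℕ) :
    Wseq n = wpairs (n / 2) ++ (if n % 2 = 1 then [n / 2 + 1] else []) := rfl

lemma wpairs_succ (m : ℕ) : wpairs (m + 1) = wpairs m ++ [m + 1, 0] := by
  rw [wpairs, List.range_succ, List.flatMap_append]; rfl

lemma wpairs_length (m : ℕ) : (wpairs m).length = 2 * m := by
  induction m with
  | zero => rfl
  | succ m ih => rw [wpairs_succ, List.length_append, ih]; simp; omega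

lemma wpairs_count_zero (m : ℕ) : (wpairs m).count 0 = m := by
  induction m with
  | zero => rfl
  | succ m ih => rw [wpairs_succ, List.count_append, ih]; simp

lemma wpairs_count_succ (m j : ℕ) : (wpairs m).count (j + 1) = if j < m then 1 else 0 := by
  induction m with
  | zero => simp [wpairs]
  | succ m ih =>
    rw [wpairs_succ, List.count_append, ih]
    have h : List.count (j + 1) [m + 1, 0] = if m = j then 1 else 0 := by
      simp [List.count_cons]
    rw [h]
    split_ifs <;> omega

lemma Wseq_length (n : ℕ) : (Wseq n).length = n := by
  rw [Wseq_eq, List.length_append, wpairs_length]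
  rcases Nat.mod_two_eq_zero_or_one n with h | h <;> simp [h] <;> omega

lemma Wseq_count_zero (n : ℕ) : (Wseq n).count 0 = n / 2 := by
  rw [Wseq_eq, List.count_append, wpairs_count_zero]
  rcases Nat.mod_two_eq_zero_or_one n with h | h <;> simp [h]

lemma Wseq_count_small (n j : ℕ) (hj : j < n / 2) : (Wseq n).count (j + 1) = 1 := by
  rw [Wseq_eq, List.count_append, wpairs_count_succ]
  have h4 : List.count (j + 1) (if n % 2 = 1 then [n / 2 + 1] else []) = 0 := by
    rcases Nat.mod_two_eq_zero_or_one n with h | h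
    · simp [h]
    · rw [h]
      simp only [if_true]
      simp [List.count_cons]
      omega
  rw [h4]
  simp [hj]

lemma Wseq_count_top (n : ℕ) (hn : n % 2 = 1) : (Wseq n).count (n / 2 + 1) = 1 := by
  rw [Wseq_eq, List.count_append, wpairs_count_succ]
  simp [hn]

lemma sum_map_pair (m : ℕ) (u v : ℕ → ℕ) (g : ℕ → ℝ) :
    ((((List.range m).flatMap fun i => [u i, v i]).map g)).sum
      = ∑ i ∈ Finset.range m, (g (u i) + g (v i)) := by
  induction m with
  | zero => simp
  | succ m ih =>
    rw [List.range_succ, List.flatMap_append]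
    simp [ih, Finset.sum_range_succ]

lemma profit_eq_list (I S : List ℕ) :
    profit I S = ((S.map fun x => (I.count x : ℝ)).sum) / I.length := by
  rw [profit, ← list_sum_map_div]; rfl

end Aux5
section Aux6

lemma bufRun_pair (s : ℕ × ℕ) (hs : s.2 = 0) (x : ℕ) (hx : x ≠ 0) (r : List ℕ) :
    bufRun s (x :: 0 :: r) = x :: x :: bufRun (x, 0) r := by
  have h1 : majStep s x = (x, 1) := by
    rcases s with ⟨b, c⟩; simp only at hs; simp [majStep, hs]
  have h0 : ¬ ((0 : ℕ) = x) := fun h => hx h.symm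
  have h2 : majStep (x, 1) 0 = (x, 0) := by simp [majStep, h0]
  simp [bufRun, h1, h2]

lemma bufRun_pairs : ∀ (m : ℕ) (f : ℕ → ℕ), (∀ i, f i ≠ 0) → ∀ (s : ℕ × ℕ), s.2 = 0 →
    ∀ r : List ℕ, ∃ s' : ℕ × ℕ, s'.2 = 0 ∧
      bufRun s (((List.range m).flatMap fun i => [f i, 0]) ++ r)
        = ((List.range m).flatMap fun i => [f i, f i]) ++ bufRun s' r := by
  intro m
  induction m with
  | zero => intro f hf s hs r; exact ⟨s, hs, by simp⟩
  | succ m ih =>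
    intro f hf s hs r
    have hfm : ∀ (g : ℕ → List ℕ), ((List.range m).map Nat.succ).flatMap g
        = (List.range m).flatMap fun i => g (i + 1) := by
      intro g
      induction List.range m with
      | nil => rfl
      | cons a l ihl => simp [List.flatMap_cons, ihl]
    obtain ⟨s', hs', hB⟩ := ih (fun i => f (i + 1)) (fun i => hf (i + 1)) (f 0, 0) rfl r
    refine ⟨s', hs', ?_⟩
    rw [List.range_succ_eq_map]
    simp only [List.flatMap_cons, hfm]
    rw [List.append_assoc, List.append_assoc]
    have hp := bufRun_pair s hs (f 0) (hf 0)
      (((List.range m).flatMap fun i => [f (i + 1), 0]) ++ r)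
    simp only [List.cons_append, List.nil_append] at hp ⊢
    rw [hp, hB]

lemma majP_Wseq (n : ℕ) (hn : 1 ≤ n) : majP (Wseq n) = 1 := by
  obtain ⟨s', hs', hB⟩ := bufRun_pairs (n / 2) (fun i => i + 1)
    (fun i => Nat.succ_ne_zero i) (0, 0) rfl (if n % 2 = 1 then [n / 2 + 1] else [])
  have hBuf : majBuffers (Wseq n)
      = ((List.range (n / 2)).flatMap fun i => [i + 1, i + 1])
        ++ bufRun s' (if n % 2 = 1 then [n / 2 + 1] else []) := by
    rw [majBuffers_eq_bufRun, Wseq_eq]; exact hB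
  have hn0 : (0 : ℝ) < (n : ℝ) := by exact_mod_cast hn
  rw [majP, profit_eq_list, Wseq_length, hBuf]
  set g : ℕ → ℝ := fun x => ((Wseq n).count x : ℝ) with hg
  rw [List.map_append, List.sum_append, sum_map_pair]
  have hterm : ∀ i ∈ Finset.range (n / 2), g (i + 1) + g (i + 1) = 2 := by
    intro i hi
    rw [show g (i + 1) = 1 from by
      simp [hg, Wseq_count_small n i (Finset.mem_range.mp hi)]]
    norm_num
  rw [Finset.sum_congr rfl hterm, Finset.sum_const, Finset.card_range]
  rcases Nat.mod_two_eq_zero_or_one n with h | h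
  · simp only [h, if_neg (by omega : ¬ (0 = 1))]
    rw [show bufRun s' ([] : List ℕ) = [] from rfl]
    simp only [List.map_nil, List.sum_nil, add_zero, nsmul_eq_mul]
    rw [div_eq_one_iff_eq (ne_of_gt hn0)]
    exact_mod_cast (by omega : n / 2 * 2 = n)
  · have h1 : majStep s' (n / 2 + 1) = (n / 2 + 1, 1) := by
      rcases s' with ⟨b, c⟩; simp only at hs'; simp [majStep, hs']
    have htail : bufRun s' [n / 2 + 1] = [n / 2 + 1] := by
      rw [show bufRun s' [n / 2 + 1]
          = (majStep s' (n / 2 + 1)).1 :: bufRun (majStep s' (n / 2 + 1)) [] from rfl, h1]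
      rfl
    rw [h, if_pos rfl, htail]
    simp only [List.map_cons, List.map_nil, List.sum_cons, List.sum_nil, nsmul_eq_mul]
    rw [show g (n / 2 + 1) = 1 from by simp [hg, Wseq_count_top n h]]
    rw [div_eq_one_iff_eq (ne_of_gt hn0)]
    rw [add_zero]
    exact_mod_cast (by omega : n / 2 * 2 + 1 = n)

lemma naiP_Wseq (n : ℕ) (hn : 1 ≤ n) :
    naiP (Wseq n) = (((n / 2 : ℕ) : ℝ) * (1 + ((n / 2 : ℕ) : ℝ)) + ((n % 2 : ℕ) : ℝ)) / n := by
  have hn0 : (0 : ℝ) < (n : ℝ) := by exact_mod_cast hn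
  rw [naiP, profit_eq_list, Wseq_length]
  set g : ℕ → ℝ := fun x => ((Wseq n).count x : ℝ) with hg
  rw [show Wseq n = wpairs (n / 2) ++ (if n % 2 = 1 then [n / 2 + 1] else []) from Wseq_eq n]
  rw [List.map_append, List.sum_append, wpairs, sum_map_pair]
  have hterm : ∀ i ∈ Finset.range (n / 2), g (i + 1) + g 0 = 1 + ((n / 2 : ℕ) : ℝ) := by
    intro i hi
    rw [show g (i + 1) = 1 from by
      simp [hg, Wseq_count_small n i (Finset.mem_range.mp hi)]]
    rw [show g 0 = ((n / 2 : ℕ) : ℝ) from by simp [hg, Wseq_count_zero]]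
  rw [Finset.sum_congr rfl hterm, Finset.sum_const, Finset.card_range]
  rcases Nat.mod_two_eq_zero_or_one n with h | h
  · simp only [h, if_neg (by omega : ¬ (0 = 1)), List.map_nil, List.sum_nil, add_zero,
      nsmul_eq_mul, Nat.cast_zero]
  · rw [h, if_pos rfl]
    simp only [List.map_cons, List.map_nil, List.sum_cons, List.sum_nil, nsmul_eq_mul,
      Nat.cast_one]
    rw [show g (n / 2 + 1) = 1 from by simp [hg, Wseq_count_top n h]]
    ring

lemma worstP_majP_Wseq (n : ℕ) (hn : 1 ≤ n) : worstP majP (Wseq n) = 1 := by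
  rw [worstP]
  apply le_antisymm
  · apply csInf_le
    · exact ⟨0, by rintro x ⟨J, hJ, rfl⟩; exact majP_nonneg J⟩
    · exact ⟨Wseq n, List.Perm.refl _, (majP_Wseq n hn).symm⟩
  · have hne : {x | ∃ J, J.Perm (Wseq n) ∧ x = majP J}.Nonempty :=
      ⟨majP (Wseq n), Wseq n, List.Perm.refl _, rfl⟩
    apply le_csInf hne
    rintro x ⟨J, hJ, rfl⟩
    apply majP_ge_one
    intro hnil
    have := hJ.length_eq
    rw [hnil, Wseq_length] at this
    simp at this
    omega

end Aux6

/-- Nai_W(I)/Maj_W(I) ≤ n/4 + 1 (at most n/4 + 1/2 for even n and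
n/4 + 1 − 1/(4n) for odd n), asymptotically attained by W_n; hence the relative
worst order function of Nai and Maj is n/4. -/
theorem stmt18 :
    (∀ I : List ℕ,
      naiP I ≤ ((I.length : ℝ) / 4 + 1) * worstP majP I ∧
      (Even I.length → naiP I ≤ ((I.length : ℝ) / 4 + 1 / 2) * worstP majP I) ∧
      (Odd I.length →
        naiP I ≤ ((I.length : ℝ) / 4 + 1 - 1 / (4 * I.length)) * worstP majP I)) ∧
    (∀ n : ℕ, Even n → 2 ≤ n →
      naiP (Wseq n) = ((n : ℝ) / 4 + 1 / 2) * worstP majP (Wseq n)) ∧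
    (∀ n : ℕ, Odd n →
      naiP (Wseq n) = ((n : ℝ) / 4 + 3 / (4 * n)) * worstP majP (Wseq n)) := by
  refine ⟨fun I => ⟨?_, ?_, ?_⟩, ?_, ?_⟩
  · have hnn : (0 : ℝ) ≤ (I.length : ℝ) := by positivity
    apply naiP_le_mul <;> [skip; intro _; skip] <;> linarith
  · intro hE
    have hnn : (0 : ℝ) ≤ (I.length : ℝ) := by positivity
    apply naiP_le_mul
    · linarith
    · intro h1
      obtain ⟨k, hk⟩ := hE
      have h2 : (2 : ℝ) ≤ (I.length : ℝ) := by exact_mod_cast (by omega : 2 ≤ I.length)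
      linarith
    · linarith
  · intro hO
    have h1 : 1 ≤ I.length := hO.pos
    have h1' : (1 : ℝ) ≤ (I.length : ℝ) := by exact_mod_cast h1
    have hfrac : 1 / (4 * (I.length : ℝ)) ≤ 1 / 4 := by
      rw [div_le_div_iff₀ (by positivity) (by norm_num)]
      linarith
    apply naiP_le_mul
    · linarith
    · intro _; linarith
    · linarith
  · intro n hE h2
    have hn1 : 1 ≤ n := by omega
    rw [naiP_Wseq n hn1, worstP_majP_Wseq n hn1, mul_one]
    obtain ⟨k, hk⟩ := hE
    have hk1 : 1 ≤ k := by omega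
    rw [(by omega : n / 2 = k), (by omega : n % 2 = 0)]
    have hnk : (n : ℝ) = 2 * k := by exact_mod_cast (by omega : n = 2 * k)
    have hkr : (1 : ℝ) ≤ (k : ℝ) := by exact_mod_cast hk1
    rw [hnk]
    push_cast
    field_simp
    ring
  · intro n hO
    have hn1 : 1 ≤ n := hO.pos
    rw [naiP_Wseq n hn1, worstP_majP_Wseq n hn1, mul_one]
    obtain ⟨k, hk⟩ := hO
    rw [(by omega : n / 2 = k), (by omega : n % 2 = 1)]
    have hnk : (n : ℝ) = 2 * k + 1 := by exact_mod_cast (by omega : n = 2 * k + 1)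
    rw [hnk]
    have hp : (0 : ℝ) < 2 * (k : ℝ) + 1 := by positivity
    push_cast
    field_simp
    ring
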